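/- Let μ be a Borel probability measure on ℝ with mean 0, variance 1, and finite fourth moment m_4(μ). Then the Lévy distance between μ and the symmetric Bernoulli distribution b = (1/2)δ_{-1} + (1/2)δ_1 satisfies L(μ, b) ≤ (7/2)·(m_4(μ) - 1)^{1/3}. -/

import Mathlib

open MeasureTheory ProbabilityTheory Set
open scoped ENNReal

/-- The Lévy distance between two probability measures on ℝ, defined via their
cumulative distribution functions. -/
noncomputable def levyDist (μ ν : Measure ℝ) : ℝ :=
  sInf {ε : ℝ | 0 < ε ∧ ∀ x : ℝ,
    cdf μ (x - ε) - ε ≤ cdf ν x ∧ cdf ν x ≤ cdf μ (x + ε) + ε}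

/-- The symmetric Bernoulli distribution `b = (1/2)δ₋₁ + (1/2)δ₁`. -/
noncomputable def bern : Measure ℝ :=
  (2 : ℝ≥0∞)⁻¹ • Measure.dirac (-1) + (2 : ℝ≥0∞)⁻¹ • Measure.dirac 1

set_option maxHeartbeats 1000000

instance : IsProbabilityMeasure bern := by
  constructor
  simp [bern]
  rw [← ENNReal.inv_two_add_inv_two]

lemma bern_cdf (x : ℝ) :
    cdf bern x = if x < -1 then 0 else if x < 1 then 1/2 else 1 := by
  rw [cdf_eq_real, measureReal_def]
  have hm : MeasurableSet (Iic x) := measurableSet_Iic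
  simp only [bern, Measure.add_apply, Measure.smul_apply, smul_eq_mul,
    Measure.dirac_apply' _ hm]
  by_cases h1 : x < -1
  · have : (-1 : ℝ) ∉ Iic x := by simp; linarith
    have h2 : (1 : ℝ) ∉ Iic x := by simp; linarith
    simp [indicator_of_notMem, this, h2, h1]
  · push_neg at h1
    have : (-1 : ℝ) ∈ Iic x := by simpa using h1
    by_cases h2 : x < 1
    · have h3 : (1 : ℝ) ∉ Iic x := by simp; linarith
      simp only [indicator_of_mem this, indicator_of_notMem h3, Pi.one_apply, mul_one, mul_zero,
        add_zero]
      rw [if_neg (not_lt.2 h1), if_pos h2]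
      simp [ENNReal.toReal_inv]
    · have h3 : (1 : ℝ) ∈ Iic x := by simp at h2 ⊢; linarith
      simp only [indicator_of_mem this, indicator_of_mem h3, Pi.one_apply, mul_one]
      rw [if_neg (not_lt.2 h1), if_neg h2]
      simp [ENNReal.inv_two_add_inv_two]

lemma cheb (μ : Measure ℝ) [IsProbabilityMeasure μ]
    (hg : Integrable (fun x : ℝ => (x ^ 2 - 1) ^ 2) μ)
    (S : Set ℝ) (hS : MeasurableSet S) (c : ℝ)
    (h : ∀ x ∈ S, c ≤ (x ^ 2 - 1) ^ 2) :
    (μ S).toReal * c ≤ ∫ x, (x ^ 2 - 1) ^ 2 ∂μ := by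
  have h1 : (μ S).toReal * c = ∫ _ in S, c ∂μ := by
    rw [setIntegral_const]; simp [smul_eq_mul, measureReal_def]
  rw [h1]
  calc ∫ _ in S, c ∂μ ≤ ∫ x in S, (x ^ 2 - 1) ^ 2 ∂μ :=
        setIntegral_mono_on (integrableOn_const (measure_ne_top μ S))
          hg.integrableOn hS h
    _ ≤ ∫ x, (x ^ 2 - 1) ^ 2 ∂μ :=
        setIntegral_le_integral hg (Filter.Eventually.of_forall fun x => sq_nonneg _)

lemma core (μ : Measure ℝ) [IsProbabilityMeasure μ]
    (hIntx : Integrable (fun x : ℝ => x) μ)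
    (hIntg : Integrable (fun x : ℝ => (x ^ 2 - 1) ^ 2) μ)
    (h1 : ∫ x, x ∂μ = 0)
    (ε : ℝ) (hε0 : 0 < ε) (hε1 : ε < 1)
    (hMε : 343 * ∫ x, (x ^ 2 - 1) ^ 2 ∂μ ≤ 8 * ε ^ 3) :
    (μ (Iic (-1 - ε))).toReal ≤ ε ∧ (μ (Ioi (1 + ε))).toReal ≤ ε ∧
      1 / 2 - ε ≤ (μ (Ioo (-1 - ε) (-1 + ε))).toReal ∧
      1 / 2 - ε ≤ (μ (Ioo (1 - ε) (1 + ε))).toReal := by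
  set M : ℝ := ∫ x, (x ^ 2 - 1) ^ 2 ∂μ with hMdef
  have hM0 : 0 ≤ M := integral_nonneg fun x => sq_nonneg _
  -- tail bounds
  have hT1 : (μ (Iic (-1 - ε))).toReal ≤ ε := by
    have h := cheb μ hIntg (Iic (-1 - ε)) measurableSet_Iic (4 * ε ^ 2) (fun x hx => by
      simp only [mem_Iic] at hx
      nlinarith [mul_nonneg (by linarith : (0:ℝ) ≤ -(x + 1 + ε)) (by linarith : (0:ℝ) ≤ -(x - 1 - ε)),
        sq_nonneg (x ^ 2 - 1 - 2 * ε)])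
    nlinarith [ENNReal.toReal_nonneg (a := μ (Iic (-1 - ε))), mul_pos hε0 hε0,
      mul_pos (mul_pos hε0 hε0) hε0]
  have hT2 : (μ (Ioi (1 + ε))).toReal ≤ ε := by
    have h := cheb μ hIntg (Ioi (1 + ε)) measurableSet_Ioi (4 * ε ^ 2) (fun x hx => by
      simp only [mem_Ioi] at hx
      nlinarith [mul_nonneg (by linarith : (0:ℝ) ≤ x + 1 + ε) (by linarith : (0:ℝ) ≤ x - 1 - ε),
        sq_nonneg (x ^ 2 - 1 - 2 * ε)])
    nlinarith [ENNReal.toReal_nonneg (a := μ (Ioi (1 + ε))), mul_pos hε0 hε0,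
      mul_pos (mul_pos hε0 hε0) hε0]
  refine ⟨hT1, hT2, ?_⟩
  -- middle bounds
  set A2 : Set ℝ := Ioo (-1 - ε) (-1 + ε) with hA2def
  set A4 : Set ℝ := Ioo (1 - ε) (1 + ε) with hA4def
  have hA2m : MeasurableSet A2 := measurableSet_Ioo
  have hA4m : MeasurableSet A4 := measurableSet_Ioo
  set R : Set ℝ := (A2 ∪ A4)ᶜ with hRdef
  have hRm : MeasurableSet R := (hA2m.union hA4m).compl
  set p : ℝ := (μ A2).toReal with hpdef
  set q : ℝ := (μ A4).toReal with hqdef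
  set r : ℝ := (μ R).toReal with hrdef
  have hp0 : 0 ≤ p := ENNReal.toReal_nonneg
  have hq0 : 0 ≤ q := ENNReal.toReal_nonneg
  have hr0 : 0 ≤ r := ENNReal.toReal_nonneg
  -- pointwise facts on R
  have hcase : ∀ x ∈ R, (1 + ε ≤ |x| ∨ |x| ≤ 1 - ε) := by
    intro x hx
    simp only [hRdef, mem_compl_iff, mem_union, hA2def, hA4def, mem_Ioo, not_or, not_and_or,
      not_lt] at hx
    obtain ⟨ha, hb⟩ := hx
    rcases ha with ha | ha
    · left; rw [abs_of_nonpos (by linarith)]; linarith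
    · rcases hb with hb | hb
      · right; rw [abs_le]; constructor <;> linarith
      · left; rw [abs_of_nonneg (by linarith)]; linarith
  have hu_out : ∀ x : ℝ, 1 + ε ≤ |x| → 2 * ε ≤ x ^ 2 - 1 := by
    intro x h
    have hxx : x ^ 2 = |x| ^ 2 := (sq_abs x).symm
    nlinarith [sq_nonneg (|x| - 1 - ε), abs_nonneg x]
  have hmid : ∀ x : ℝ, |x| ≤ 1 - ε → ε ≤ 1 - x ^ 2 := by
    intro x h
    have hxx : x ^ 2 = |x| ^ 2 := (sq_abs x).symm
    nlinarith [abs_nonneg x, mul_le_mul h h (abs_nonneg x) (by linarith : (0:ℝ) ≤ 1 - ε)]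
  have hRb : ∀ x ∈ R, ε ^ 2 ≤ (x ^ 2 - 1) ^ 2 := by
    intro x hx
    rcases hcase x hx with h | h
    · have := hu_out x h
      nlinarith [sq_nonneg (x ^ 2 - 1 - ε)]
    · have := hmid x h
      nlinarith [sq_nonneg (1 - x ^ 2 - ε)]
  have hRa : ∀ x ∈ R, |x| * (2 * ε ^ 2) ≤ 3 * (x ^ 2 - 1) ^ 2 := by
    intro x hx
    have hax := abs_nonneg x
    have hxx : x ^ 2 = |x| ^ 2 := (sq_abs x).symm
    have hb := hRb x hx
    rcases hcase x hx with h | h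
    · have hu := hu_out x h
      have hxa : |x| ≤ x ^ 2 := by nlinarith
      have step1 : 2 * ε * x ^ 2 ≤ 3 * (x ^ 2 - 1) := by nlinarith
      calc |x| * (2 * ε ^ 2) ≤ x ^ 2 * (2 * ε ^ 2) := by nlinarith [mul_pos hε0 hε0]
        _ = ε * (2 * ε * x ^ 2) := by ring
        _ ≤ ε * (3 * (x ^ 2 - 1)) := mul_le_mul_of_nonneg_left step1 hε0.le
        _ ≤ 3 * (x ^ 2 - 1) ^ 2 := by nlinarith [mul_nonneg (by linarith : (0:ℝ) ≤ x ^ 2 - 1 - 2 * ε) (by linarith : (0:ℝ) ≤ x ^ 2 - 1)]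
    · have h1x : |x| ≤ 1 := by linarith
      nlinarith [mul_nonneg (by positivity : (0:ℝ) ≤ 2 * ε ^ 2) (by linarith : (0:ℝ) ≤ 1 - |x|)]
  have hr1 : r * ε ^ 2 ≤ M := cheb μ hIntg R hRm (ε ^ 2) hRb
  -- the error integral over R
  set E : ℝ := ∫ x in R, x ∂μ with hEdef
  have hE : |E| * (2 * ε ^ 2) ≤ 3 * M := by
    have e1 : |E| ≤ ∫ x in R, |x| ∂μ := by
      simpa [Real.norm_eq_abs] using
        norm_integral_le_integral_norm (μ := μ.restrict R) (f := fun x : ℝ => x)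
    have e2 : ∫ x in R, |x| * (2 * ε ^ 2) ∂μ ≤ ∫ x in R, 3 * (x ^ 2 - 1) ^ 2 ∂μ :=
      setIntegral_mono_on ((hIntx.abs.mul_const _).integrableOn)
        ((hIntg.const_mul 3).integrableOn) hRm hRa
    have e3 : ∫ x in R, (x ^ 2 - 1) ^ 2 ∂μ ≤ M :=
      setIntegral_le_integral hIntg (Filter.Eventually.of_forall fun x => sq_nonneg _)
    have e4 : ∫ x in R, |x| * (2 * ε ^ 2) ∂μ = (∫ x in R, |x| ∂μ) * (2 * ε ^ 2) :=
      integral_mul_const _ _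
    have e5 : ∫ x in R, 3 * (x ^ 2 - 1) ^ 2 ∂μ = 3 * ∫ x in R, (x ^ 2 - 1) ^ 2 ∂μ :=
      integral_const_mul _ _
    have e6 : (0:ℝ) ≤ 2 * ε ^ 2 := by positivity
    have e7 := mul_le_mul_of_nonneg_right e1 e6
    rw [← e4] at e7
    linarith
  have hE1 : E * (2 * ε ^ 2) ≤ 3 * M :=
    le_trans (mul_le_mul_of_nonneg_right (le_abs_self E) (by positivity)) hE
  have hE2 : -(3 * M) ≤ E * (2 * ε ^ 2) := by
    have := mul_le_mul_of_nonneg_right (neg_abs_le E) (by positivity : (0:ℝ) ≤ 2 * ε ^ 2)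
    nlinarith
  -- splitting the mean
  have hdisj : Disjoint A2 A4 := by
    rw [Set.disjoint_left]
    intro x hx2 hx4
    simp only [hA2def, hA4def, mem_Ioo] at hx2 hx4
    linarith [hx2.2, hx4.1]
  have hs1 : (0:ℝ) = ∫ x in A2 ∪ A4, x ∂μ + E := by
    rw [← h1]; exact (integral_add_compl (hA2m.union hA4m) hIntx).symm
  have hs2 : ∫ x in A2 ∪ A4, x ∂μ = ∫ x in A2, x ∂μ + ∫ x in A4, x ∂μ :=
    setIntegral_union hdisj hA4m hIntx.integrableOn hIntx.integrableOn
  -- bounds on the interval integrals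
  have hI2u : ∫ x in A2, x ∂μ ≤ (-1 + ε) * p := by
    calc ∫ x in A2, x ∂μ ≤ ∫ _ in A2, (-1 + ε) ∂μ :=
          setIntegral_mono_on hIntx.integrableOn
            (integrableOn_const (measure_ne_top μ _)) hA2m
            (fun x hx => le_of_lt hx.2)
      _ = (-1 + ε) * p := by rw [setIntegral_const, smul_eq_mul, mul_comm]; rfl
  have hI2l : -(1 + ε) * p ≤ ∫ x in A2, x ∂μ := by
    calc -(1 + ε) * p = ∫ _ in A2, -(1 + ε) ∂μ := by
          rw [setIntegral_const, smul_eq_mul, mul_comm]; rfl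
      _ ≤ ∫ x in A2, x ∂μ :=
          setIntegral_mono_on (integrableOn_const (measure_ne_top μ _))
            hIntx.integrableOn hA2m (fun x hx => by have := hx.1; linarith)
  have hI4u : ∫ x in A4, x ∂μ ≤ (1 + ε) * q := by
    calc ∫ x in A4, x ∂μ ≤ ∫ _ in A4, (1 + ε) ∂μ :=
          setIntegral_mono_on hIntx.integrableOn
            (integrableOn_const (measure_ne_top μ _)) hA4m
            (fun x hx => le_of_lt hx.2)
      _ = (1 + ε) * q := by rw [setIntegral_const, smul_eq_mul, mul_comm]; rfl
  have hI4l : (1 - ε) * q ≤ ∫ x in A4, x ∂μ := by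
    calc (1 - ε) * q = ∫ _ in A4, (1 - ε) ∂μ := by
          rw [setIntegral_const, smul_eq_mul, mul_comm]; rfl
      _ ≤ ∫ x in A4, x ∂μ :=
          setIntegral_mono_on (integrableOn_const (measure_ne_top μ _))
            hIntx.integrableOn hA4m (fun x hx => by have := hx.1; linarith)
  -- total mass
  have hpqr : p + q + r = 1 := by
    have h := measure_add_measure_compl (μ := μ) (hA2m.union hA4m)
    rw [measure_union hdisj hA4m, measure_univ] at h
    have h' := congrArg ENNReal.toReal h
    rw [ENNReal.toReal_add (by finiteness) (by finiteness),
      ENNReal.toReal_add (by finiteness) (by finiteness), ENNReal.toReal_one] at h'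
    exact h'
  have hreq : r = 1 - p - q := by linarith
  have hr' : (1 - p - q) * ε ^ 2 ≤ M := by rw [hreq] at hr1; exact hr1
  have h1e : (0:ℝ) < 1 - ε := by linarith
  have hq1 : q ≤ 1 := by linarith
  have hp1 : p ≤ 1 := by linarith
  -- combine
  have k1 : ((1 - ε) * q - (1 + ε) * p) * (2 * ε ^ 2) ≤ (-E) * (2 * ε ^ 2) :=
    mul_le_mul_of_nonneg_right (by linarith) (by positivity)
  have k2 : (-E) * (2 * ε ^ 2) ≤ 3 * M := by linarith
  have k1' : ((1 - ε) * p - (1 + ε) * q) * (2 * ε ^ 2) ≤ E * (2 * ε ^ 2) :=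
    mul_le_mul_of_nonneg_right (by linarith) (by positivity)
  constructor
  · nlinarith [k1, k2, hr', hMε, hε0, h1e, hq0, hp0, mul_pos hε0 hε0,
      mul_pos (mul_pos hε0 hε0) hε0, mul_le_mul_of_nonneg_left hr' (by linarith : (0:ℝ) ≤ 2 * (1 - ε))]
  · nlinarith [k1', hE1, hr', hMε, hε0, h1e, hq0, hp0, mul_pos hε0 hε0,
      mul_pos (mul_pos hε0 hε0) hε0, mul_le_mul_of_nonneg_left hr' (by linarith : (0:ℝ) ≤ 2 * (1 - ε))]

theorem levy_dist_le_cbrt_fourth_moment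
    (μ : Measure ℝ) [IsProbabilityMeasure μ]
    (h4 : MemLp (fun x => x) 4 μ)
    (h1 : ∫ x, x ∂μ = 0) (h2 : ∫ x, x ^ 2 ∂μ = 1) :
    levyDist μ bern ≤ (7 / 2) * ((∫ x, x ^ 4 ∂μ) - 1) ^ ((1 : ℝ) / 3) := by
  have hIntx : Integrable (fun x : ℝ => x) μ := h4.integrable (by norm_num)
  have hInt2 : Integrable (fun x : ℝ => x ^ 2) μ :=
    (h4.mono_exponent (p := 2) (by norm_num)).integrable_sq
  have hInt4 : Integrable (fun x : ℝ => x ^ 4) μ := by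
    have h := h4.integrable_norm_rpow (by norm_num) (by norm_num)
    refine h.congr (Filter.Eventually.of_forall fun x => ?_)
    simp only []
    rw [Real.norm_eq_abs, show ENNReal.toReal 4 = ((4 : ℕ) : ℝ) by simp,
      Real.rpow_natCast, pow_abs, abs_of_nonneg (by positivity)]
  have hsub : Integrable (fun x : ℝ => x ^ 4 - 2 * x ^ 2) μ := hInt4.sub (hInt2.const_mul 2)
  have hIntg : Integrable (fun x : ℝ => (x ^ 2 - 1) ^ 2) μ := by
    have : (fun x : ℝ => (x ^ 2 - 1) ^ 2) = fun x => x ^ 4 - 2 * x ^ 2 + 1 := by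
      funext x; ring
    rw [this]
    exact hsub.add (integrable_const 1)
  have Mkey : ∫ x, (x ^ 2 - 1) ^ 2 ∂μ = (∫ x, x ^ 4 ∂μ) - 1 := by
    have : (fun x : ℝ => (x ^ 2 - 1) ^ 2) = fun x => x ^ 4 - 2 * x ^ 2 + 1 := by
      funext x; ring
    rw [this, integral_add hsub (integrable_const 1),
      integral_sub hInt4 (hInt2.const_mul 2), integral_const_mul, h2, integral_const]
    simp
    ring
  have hM0 : 0 ≤ (∫ x, x ^ 4 ∂μ) - 1 := by
    rw [← Mkey]; exact integral_nonneg fun x => sq_nonneg _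
  refine le_of_forall_gt_imp_ge_of_dense fun ε hε => ?_
  have hε0 : 0 < ε := lt_of_le_of_lt (by positivity) hε
  unfold levyDist
  apply csInf_le ⟨0, fun y hy => le_of_lt hy.1⟩
  refine ⟨hε0, fun x => ?_⟩
  by_cases hε1 : 1 ≤ ε
  · exact ⟨by linarith [cdf_le_one μ (x - ε), cdf_nonneg bern x],
      by linarith [cdf_nonneg μ (x + ε), cdf_le_one bern x]⟩
  · push_neg at hε1
    have hMε : 343 * ∫ x, (x ^ 2 - 1) ^ 2 ∂μ ≤ 8 * ε ^ 3 := by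
      rw [Mkey]
      have h3 : ((∫ x, x ^ 4 ∂μ) - 1) ^ ((1:ℝ)/3) < ε * (2/7) := by linarith
      have hnn : 0 ≤ ((∫ x, x ^ 4 ∂μ) - 1) ^ ((1:ℝ)/3) := Real.rpow_nonneg hM0 _
      have h4' : (((∫ x, x ^ 4 ∂μ) - 1) ^ ((1:ℝ)/3)) ^ (3:ℕ) < (ε * (2/7)) ^ (3:ℕ) :=
        pow_lt_pow_left₀ h3 hnn (by norm_num)
      rw [← Real.rpow_natCast (((∫ x, x ^ 4 ∂μ) - 1) ^ ((1:ℝ)/3)) 3,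
        ← Real.rpow_mul hM0] at h4'
      norm_num at h4'
      nlinarith [h4']
    obtain ⟨hT1, hT2, hp, hq⟩ := core μ hIntx hIntg h1 ε hε0 hε1 hMε
    rcases lt_or_ge x (-1) with hx | hx
    · rw [bern_cdf, if_pos hx]
      constructor
      · have hm : cdf μ (x - ε) ≤ cdf μ (-1 - ε) := monotone_cdf μ (by linarith)
        have hc : cdf μ (-1 - ε) ≤ ε := by rw [cdf_eq_real]; exact hT1
        linarith
      · linarith [cdf_nonneg μ (x + ε)]
    · rcases lt_or_ge x 1 with hx2 | hx2
      · rw [bern_cdf, if_neg (not_lt.2 hx), if_pos hx2]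
        constructor
        · have hdisj2 : Disjoint (Iic (x - ε)) (Ioo (1 - ε) (1 + ε)) := by
            rw [Set.disjoint_left]
            intro a ha hb
            simp only [mem_Iic, mem_Ioo] at ha hb
            linarith [hb.1]
          have hsum : μ (Iic (x - ε)) + μ (Ioo (1 - ε) (1 + ε)) ≤ 1 := by
            rw [← measure_union hdisj2 measurableSet_Ioo]; exact prob_le_one
          have hsum' := ENNReal.toReal_mono ENNReal.one_ne_top hsum
          rw [ENNReal.toReal_add (measure_ne_top μ _) (measure_ne_top μ _),
            ENNReal.toReal_one] at hsum'
          rw [cdf_eq_real, measureReal_def]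
          linarith
        · have hm : cdf μ (-1 + ε) ≤ cdf μ (x + ε) := monotone_cdf μ (by linarith)
          have h5 : (μ (Ioo (-1 - ε) (-1 + ε))).toReal ≤ cdf μ (-1 + ε) := by
            rw [cdf_eq_real]
            exact ENNReal.toReal_mono (measure_ne_top μ _)
              (measure_mono fun a ha => le_of_lt ha.2)
          linarith
      · rw [bern_cdf, if_neg (not_lt.2 hx), if_neg (not_lt.2 hx2)]
        constructor
        · linarith [cdf_le_one μ (x - ε)]
        · have hm : cdf μ (1 + ε) ≤ cdf μ (x + ε) := monotone_cdf μ (by linarith)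
          have hc : μ (Iic (1 + ε)) + μ (Ioi (1 + ε)) = 1 := by
            have h := measure_add_measure_compl (μ := μ) (measurableSet_Iic (a := 1 + ε))
            rwa [Set.compl_Iic, measure_univ] at h
          have hc' := congrArg ENNReal.toReal hc
          rw [ENNReal.toReal_add (measure_ne_top μ _) (measure_ne_top μ _),
            ENNReal.toReal_one] at hc'
          have he : cdf μ (1 + ε) = (μ (Iic (1 + ε))).toReal := cdf_eq_real μ _
          linarith
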